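/- Let G be a finite simple graph with N vertices and let W be a walk in G that visits every vertex of G and whose start and end vertices are adjacent in G. Then there exists a walk W' in G that visits every vertex of G, whose start and end vertices are adjacent in G, such that every vertex that is unbounded in W' is unbounded in W, and every vertex occurs at most N times in the vertex sequence of W'. -/

import Mathlib

open SimpleGraph Finset

section Aux
variable {V : Type*} [DecidableEq V] {G : SimpleGraph V} {u y w : V}

private lemma count_support_eq (Q : G.Walk u w) (z : V) :
    Q.support.count z = Q.support.tail.count z + (if z = u then 1 else 0) := by
  conv_lhs => rw [Q.support_eq_cons]
  rw [List.count_cons]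
  by_cases hz : z = u
  · subst hz; simp
  · simp [hz, Ne.symm hz]

private lemma count_support_cons (h : G.Adj u y) (p : G.Walk y w) (z : V) :
    (Walk.cons h p).support.count z = p.support.count z + (if z = u then 1 else 0) := by
  have := count_support_eq (Walk.cons h p) z
  rwa [Walk.support_cons, List.tail_cons] at this

private lemma count_support_append {v : V} (p : G.Walk u v) (q : G.Walk v w) (z : V) :
    (p.append q).support.count z = p.support.count z + q.support.tail.count z := by
  rw [Walk.support_append, List.count_append]

end Aux

section Main
variable {V : Type*} [Fintype V] [DecidableEq V] {G : SimpleGraph V} {c d : V}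

/-- Core loop-deletion lemma. -/
private lemma lemE (x : V) : ∀ (n : ℕ) (d : V) (R : G.Walk x d), R.length ≤ n → ∀ T : Finset V,
    ∃ R' : G.Walk x d,
      (∀ v, R'.support.count v ≤ R.support.count v) ∧
      (∀ v ∈ R.support, v ∈ T ∨ v ∈ R'.support) ∧
      R'.support.count x ≤ (univ \ insert x T).card + 1 := by
  intro n
  induction n with
  | zero =>
    intro d R hn T
    refine ⟨R, fun v => le_refl _, fun v hv => Or.inr hv, ?_⟩
    cases R with
    | nil => simp
    | cons h p => simp [Walk.length_cons] at hn
  | succ n ih =>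
    intro d R hn T
    by_cases hmem : x ∈ R.support.tail
    · -- x occurs again
      cases R with
      | nil => simp at hmem
      | cons h R₁ =>
        rename_i y
        rw [Walk.support_cons, List.tail_cons] at hmem
        have hx : x ∈ R₁.support := hmem
        have hspec : (R₁.takeUntil x hx).append (R₁.dropUntil x hx) = R₁ := R₁.take_spec hx
        set L' := R₁.takeUntil x hx with hL'
        set R₂ := R₁.dropUntil x hx with hR₂
        have hlen : R₂.length ≤ n := by
          have h1 : R₂.length ≤ R₁.length := R₁.length_dropUntil_le hx
          have h2 : R₁.length + 1 ≤ n + 1 := by rw [Walk.length_cons] at hn; exact hn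
          omega
        have hL'x : L'.support.count x = 1 := R₁.count_support_takeUntil_eq_one hx
        obtain ⟨R₂', hc, hcov, hbound⟩ := ih d R₂ hlen (T ∪ (Walk.cons h L').support.toFinset)
        have hcR₁ : ∀ v, R₁.support.count v = L'.support.count v + R₂.support.tail.count v := by
          intro v; rw [← hspec, count_support_append]
        have hctail : ∀ v, R₂'.support.tail.count v ≤ R₂.support.tail.count v := by
          intro v
          have h1 := count_support_eq R₂' v
          have h2 := count_support_eq R₂ v
          have h3 := hc v
          omega
        by_cases hrem : ∀ v ∈ (Walk.cons h L').support, v ∈ T ∨ v ∈ R₂'.support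
        · -- delete the loop
          refine ⟨R₂', ?_, ?_, ?_⟩
          · intro v
            have h1 := hc v
            have h2 := hcR₁ v
            have h3 := count_support_eq R₂ v
            have h4 := count_support_cons h R₁ v
            omega
          · intro v hv
            rw [Walk.support_cons] at hv
            rcases List.mem_cons.mp hv with rfl | hv
            · exact Or.inr R₂'.start_mem_support
            · rw [← hspec, Walk.mem_support_append_iff] at hv
              rcases hv with hv | hv
              · exact hrem v (by rw [Walk.support_cons]; exact List.mem_cons_of_mem _ hv)
              · rcases hcov v hv with hT | hR
                · rcases Finset.mem_union.mp hT with hT | hT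
                  · exact Or.inl hT
                  · exact hrem v (List.mem_toFinset.mp hT)
                · exact Or.inr hR
          · refine hbound.trans ?_
            have : (univ \ insert x (T ∪ (Walk.cons h L').support.toFinset)).card
                ≤ (univ \ insert x T).card := by
              apply Finset.card_le_card
              exact Finset.sdiff_subset_sdiff (Finset.Subset.refl _)
                (Finset.insert_subset_insert _ Finset.subset_union_left)
            omega
        · -- keep the loop
          push_neg at hrem
          obtain ⟨v₀, hv₀L, hv₀T, hv₀R⟩ := hrem
          refine ⟨Walk.cons h (L'.append R₂'), ?_, ?_, ?_⟩
          · intro v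
            have h1 := count_support_cons h (L'.append R₂') v
            have h1' := count_support_append L' R₂' v
            have h2 := count_support_cons h R₁ v
            have h3 := hctail v
            have h4 := hcR₁ v
            omega
          · intro v hv
            rw [Walk.support_cons] at hv
            rcases List.mem_cons.mp hv with rfl | hv
            · exact Or.inr (Walk.start_mem_support _)
            · rw [← hspec, Walk.mem_support_append_iff] at hv
              rcases hv with hv | hv
              · exact Or.inr (by
                  rw [Walk.support_cons]
                  exact List.mem_cons_of_mem _
                    ((Walk.mem_support_append_iff _ _).mpr (Or.inl hv)))
              · rcases hcov v hv with hT | hR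
                · rcases Finset.mem_union.mp hT with hT | hT
                  · exact Or.inl hT
                  · refine Or.inr ?_
                    have hT' := List.mem_toFinset.mp hT
                    rw [Walk.support_cons] at hT' ⊢
                    rcases List.mem_cons.mp hT' with rfl | hT'
                    · exact List.mem_cons_self
                    · exact List.mem_cons_of_mem _
                        ((Walk.mem_support_append_iff _ _).mpr (Or.inl hT'))
                · exact Or.inr (by
                    rw [Walk.support_cons]
                    exact List.mem_cons_of_mem _
                      ((Walk.mem_support_append_iff _ _).mpr (Or.inr hR)))
          · -- count bound
            have h1 := count_support_cons h (L'.append R₂') x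
            have h1' := count_support_append L' R₂' x
            have h2 := count_support_eq R₂' x
            rw [if_pos rfl] at h1 h2
            have hcard : (univ \ insert x (T ∪ (Walk.cons h L').support.toFinset)).card
                < (univ \ insert x T).card := by
              apply Finset.card_lt_card
              rw [Finset.ssubset_def]
              constructor
              · exact Finset.sdiff_subset_sdiff (Finset.Subset.refl _)
                  (Finset.insert_subset_insert _ Finset.subset_union_left)
              · intro hsub
                have hv₀x : v₀ ≠ x := fun he => hv₀R (he ▸ R₂'.start_mem_support)
                have hmem1 : v₀ ∈ univ \ insert x T :=
                  Finset.mem_sdiff.mpr ⟨Finset.mem_univ _,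
                    fun hins => (Finset.mem_insert.mp hins).elim hv₀x hv₀T⟩
                have hmem2 := hsub hmem1
                exact (Finset.mem_sdiff.mp hmem2).2
                  (Finset.mem_insert_of_mem (Finset.mem_union_right _
                    (List.mem_toFinset.mpr hv₀L)))
            omega
    · -- x occurs only once in R
      refine ⟨R, fun v => le_refl _, fun v hv => Or.inr hv, ?_⟩
      have h1 := count_support_eq R x
      rw [if_pos rfl] at h1
      rw [h1, List.count_eq_zero_of_not_mem hmem]
      omega

/-- Per-vertex bounding lemma. -/
private lemma lemF (U : G.Walk c d) (x : V) :
    ∃ U' : G.Walk c d, (∀ v, U'.support.count v ≤ U.support.count v) ∧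
      (∀ v ∈ U.support, v ∈ U'.support) ∧
      U'.support.count x ≤ Fintype.card V := by
  by_cases hx : x ∈ U.support
  · have hspec : (U.takeUntil x hx).append (U.dropUntil x hx) = U := U.take_spec hx
    set P := U.takeUntil x hx with hP
    set R := U.dropUntil x hx with hR
    obtain ⟨R', hc, hcov, hbound⟩ := lemE x R.length d R (le_refl _) P.support.toFinset
    have hctail : ∀ v, R'.support.tail.count v ≤ R.support.tail.count v := by
      intro v
      have h1 := count_support_eq R' v
      have h2 := count_support_eq R v
      have h3 := hc v
      omega
    refine ⟨P.append R', ?_, ?_, ?_⟩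
    · intro v
      rw [← hspec, count_support_append, count_support_append]
      exact Nat.add_le_add_left (hctail v) _
    · intro v hv
      rw [← hspec, Walk.mem_support_append_iff] at hv
      rw [Walk.mem_support_append_iff]
      rcases hv with hv | hv
      · exact Or.inl hv
      · rcases hcov v hv with hT | hR'
        · exact Or.inl (List.mem_toFinset.mp hT)
        · exact Or.inr hR'
    · have hPx : P.support.count x = 1 := U.count_support_takeUntil_eq_one hx
      have h1 := count_support_append P R' x
      have h2 := count_support_eq R' x
      rw [if_pos rfl] at h2
      have h3 : (univ \ insert x P.support.toFinset).card ≤ Fintype.card V - 1 := by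
        have h6 : 1 ≤ (insert x P.support.toFinset).card :=
          Finset.card_pos.mpr ⟨x, Finset.mem_insert_self _ _⟩
        have h4 := Finset.card_sdiff_of_subset (Finset.subset_univ (insert x P.support.toFinset))
        rw [Finset.card_univ] at h4
        omega
      have h5 : 1 ≤ Fintype.card V := Fintype.card_pos_iff.mpr ⟨x⟩
      omega
  · exact ⟨U, fun v => le_refl _, fun v hv => hv, by
      rw [List.count_eq_zero_of_not_mem hx]; exact Nat.zero_le _⟩

private lemma lemG (l : List V) (U : G.Walk c d) :
    ∃ U' : G.Walk c d, (∀ v, U'.support.count v ≤ U.support.count v) ∧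
      (∀ v ∈ U.support, v ∈ U'.support) ∧
      (∀ x ∈ l, U'.support.count x ≤ Fintype.card V) := by
  induction l with
  | nil => exact ⟨U, fun v => le_refl _, fun v hv => hv, by simp⟩
  | cons x l ih =>
    obtain ⟨U₁, hc₁, hcov₁, hb₁⟩ := ih
    obtain ⟨U₂, hc₂, hcov₂, hb₂⟩ := lemF U₁ x
    refine ⟨U₂, fun v => (hc₂ v).trans (hc₁ v), fun v hv => hcov₂ v (hcov₁ v hv), ?_⟩
    intro z hz
    rcases List.mem_cons.mp hz with rfl | hz
    · exact hb₂
    · exact (hc₂ z).trans (hb₁ z hz)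

end Main

theorem exists_unbounded_hamiltonian_cycle_with_bounded_multiplicity
    {V : Type*} [Fintype V] [DecidableEq V] (G : SimpleGraph V)
    {a b : V} (hab : G.Adj a b) (W : G.Walk a b) (hW : ∀ x : V, x ∈ W.support) :
    ∃ (a' b' : V) (_ : G.Adj a' b') (W' : G.Walk a' b'),
      (∀ x : V, x ∈ W'.support) ∧
      (∀ x : V, 1 < W'.support.count x → 1 < W.support.count x) ∧
      (∀ x : V, W'.support.count x ≤ Fintype.card V) := by
  obtain ⟨W', hc, hcov, hb⟩ := lemG (Finset.univ : Finset V).toList W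
  exact ⟨a, b, hab, W', fun x => hcov x (hW x),
    fun x hx => lt_of_lt_of_le hx (hc x),
    fun x => hb x (Finset.mem_toList.mpr (Finset.mem_univ x))⟩
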